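/- Let a ∈ ℂ, and let L_7^a be the 7-dimensional complex Lie algebra with basis x_1, …, x_7 and non-trivial brackets [x_1,x_2]=x_3, [x_1,x_3]=x_4, [x_1,x_6]=−x_1, [x_1,x_7]=−x_5, [x_2,x_6]=−a·x_2, [x_2,x_7]=−x_2, [x_6,x_3]=(1+a)x_3, [x_3,x_7]=−x_3, [x_4,x_6]=−(2+a)x_4, [x_4,x_7]=−x_4, [x_5,x_6]=−x_5. For x ∈ ℂ^7 let A_x be the 7×7 skew-symmetric matrix with (i,j) entry Σ_k c_{ij}^k x_k, where c_{ij}^k are the structure constants of L_7^a, and let R = max_{y ∈ ℂ^7} rank A_y. Then there exists a nonzero polynomial F in 14 variables over ℂ such that for every (x, a') ∈ ℂ^7 × ℂ^7 with F(x, a') ≠ 0 and every (α, β) ∈ ℂ² with (α, β) ≠ (0, 0), one has rank(αA_x + βA_{a'}) = R. (Hence the generic pencil has no Jordan blocks, i.e. L_7^a is of Kronecker type.) -/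

import Mathlib

open Matrix

noncomputable section

/-- The skew-symmetric matrix `A_x` (with `(i,j)` entry `Σ_k c_ij^k x_k`) of the
7-dimensional complex Lie algebra `L7` with non-trivial brackets
`[x₁,x₂]=x₃, [x₁,x₃]=x₄, [x₁,x₆]=-x₁, [x₁,x₇]=-x₅, [x₂,x₆]=-a·x₂, [x₂,x₇]=-x₂, [x₆,x₃]=(1+a)x₃, [x₃,x₇]=-x₃, [x₄,x₆]=-(2+a)x₄, [x₄,x₇]=-x₄, [x₅,x₆]=-x₅`. -/
def L7mat (a : ℂ) (x : Fin 7 → ℂ) : Matrix (Fin 7) (Fin 7) ℂ :=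
  !![0, x 2, x 3, 0, 0, -x 0, -x 4;
     -x 2, 0, 0, 0, 0, -a * x 1, -x 1;
     -x 3, 0, 0, 0, 0, -(1 + a) * x 2, -x 2;
     0, 0, 0, 0, 0, -(2 + a) * x 3, -x 3;
     0, 0, 0, 0, 0, -x 4, 0;
     x 0, a * x 1, (1 + a) * x 2, (2 + a) * x 3, x 4, 0, 0;
     x 4, x 1, x 2, x 3, 0, 0, 0]

private lemma v6 (α : Type*) (a b c d e f : α) : ![a,b,c,d,e,f] 5 = f := rfl

private lemma v6c {α : Type*} (p q r s u v : α) :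
    Matrix.vecCons p
      (fun i => Matrix.vecCons q
        (fun i => Matrix.vecCons r (fun i => Matrix.vecCons s
          (fun i => Matrix.vecCons u (fun _ => v) i) i) i) i)
      (5 : Fin 6) = v := rfl

private lemma sub_as_mul {A : Matrix (Fin 7) (Fin 7) ℂ} (f g : Fin 6 → Fin 7) :
    (Matrix.of fun (i : Fin 6) (k : Fin 7) => if f i = k then (1:ℂ) else 0) * A *
      (Matrix.of fun (k : Fin 7) (j : Fin 6) => if k = g j then (1:ℂ) else 0) =
    A.submatrix f g := by
  ext i j
  simp [Matrix.mul_apply, ite_mul, mul_ite, Finset.sum_ite_eq, Finset.sum_ite_eq']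

private lemma rank_ge_of_submatrix (A : Matrix (Fin 7) (Fin 7) ℂ) (f g : Fin 6 → Fin 7)
    (h : (A.submatrix f g).det ≠ 0) : 6 ≤ A.rank := by
  have h1 : (A.submatrix f g).rank = 6 := by
    have := Matrix.rank_of_isUnit (A.submatrix f g)
      ((Matrix.isUnit_iff_isUnit_det _).mpr (isUnit_iff_ne_zero.mpr h))
    simpa using this
  calc (6:ℕ) = (A.submatrix f g).rank := h1.symm
    _ ≤ _ := by
        rw [← sub_as_mul f g]
        exact le_trans (Matrix.rank_mul_le_left _ _) (Matrix.rank_mul_le_right _ _)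

private lemma rank_le_six_of_det (A : Matrix (Fin 7) (Fin 7) ℂ) (h : A.det = 0) :
    A.rank ≤ 6 := by
  obtain ⟨v, hv, hAv⟩ := (Matrix.exists_mulVec_eq_zero_iff).mpr h
  have hker : LinearMap.ker A.mulVecLin ≠ ⊥ := by
    intro hb
    exact hv (by simpa [hb] using (LinearMap.mem_ker.mpr (by simpa using hAv) :
      v ∈ LinearMap.ker A.mulVecLin))
  have hrn := LinearMap.finrank_range_add_finrank_ker A.mulVecLin
  have h7 : Module.finrank ℂ (Fin 7 → ℂ) = 7 := by simp
  have hk : 1 ≤ Module.finrank ℂ (LinearMap.ker A.mulVecLin) := by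
    rcases Nat.eq_zero_or_pos (Module.finrank ℂ (LinearMap.ker A.mulVecLin)) with h0 | h0
    · exact absurd (Submodule.finrank_eq_zero.mp h0) hker
    · exact h0
  have : A.rank = Module.finrank ℂ (LinearMap.range A.mulVecLin) := rfl
  omega

private lemma L7_skew (a : ℂ) (y : Fin 7 → ℂ) : (L7mat a y)ᵀ = -(L7mat a y) := by
  rw [← Matrix.ext_iff]
  simp only [L7mat, Fin.forall_fin_succ, Matrix.transpose_apply, Matrix.neg_apply,
    Matrix.cons_val_zero, Matrix.cons_val_succ, Matrix.of_apply, IsEmpty.forall_iff, and_true]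
  norm_num
  and_intros <;> first | trivial | ring

private lemma L7_det_zero (a : ℂ) (y : Fin 7 → ℂ) : (L7mat a y).det = 0 := by
  have h : (L7mat a y).det = -(L7mat a y).det := by
    conv_lhs => rw [← Matrix.det_transpose, L7_skew]
    rw [Matrix.det_neg]
    norm_num
  have h2 : (2:ℂ) * (L7mat a y).det = 0 := by linear_combination h
  exact (mul_eq_zero.mp h2).resolve_left two_ne_zero

private lemma L7_rank_le (a : ℂ) (y : Fin 7 → ℂ) : (L7mat a y).rank ≤ 6 :=
  rank_le_six_of_det _ (L7_det_zero a y)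

set_option maxHeartbeats 2000000 in
private lemma L7_det1 (a : ℂ) (y : Fin 7 → ℂ) :
    ((L7mat a y).submatrix ![0,2,3,4,5,6] ![0,2,3,4,5,6]).det = (y 3 ^ 2 * y 4) ^ 2 := by
  rw [show ((L7mat a y).submatrix ![0,2,3,4,5,6] ![0,2,3,4,5,6]) =
      !![0, y 3, 0, 0, -y 0, -y 4;
       -(y 3), 0, 0, 0, -(1+a) * y 2, -(y 2);
       0, 0, 0, 0, -(2+a) * y 3, -(y 3);
       0, 0, 0, 0, -(y 4), 0;
       y 0, (1+a) * y 2, (2+a) * y 3, y 4, 0, 0;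
       y 4, y 2, y 3, 0, 0, 0] from by ext i k; fin_cases i <;> fin_cases k <;> rfl]
  rw [det_succ_row _ 3, Fin.sum_univ_six]
  simp only [v6, v6c, cons_val_zero, cons_val_one, cons_val_two, cons_val_three, cons_val_four,
    head_cons, tail_cons, head_fin_const, of_apply, cons_val', empty_val', cons_val_fin_one,
    mul_zero, zero_mul, mul_one, one_mul, neg_zero, add_zero, zero_add]
  rw [show ((!![0, y 3, 0, 0, -y 0, -y 4;
       -(y 3), 0, 0, 0, -(1+a) * y 2, -(y 2);
       0, 0, 0, 0, -(2+a) * y 3, -(y 3);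
       0, 0, 0, 0, -(y 4), 0;
       y 0, (1+a) * y 2, (2+a) * y 3, y 4, 0, 0;
       y 4, y 2, y 3, 0, 0, 0] : Matrix (Fin 6) (Fin 6) ℂ).submatrix
        (Fin.succAbove 3) (Fin.succAbove 4)) =
      !![0, y 3, 0, 0, -(y 4);
         -(y 3), 0, 0, 0, -(y 2);
         0, 0, 0, 0, -(y 3);
         y 0, (1+a) * y 2, (2+a) * y 3, y 4, 0;
         y 4, y 2, y 3, 0, 0] from by ext i k; fin_cases i <;> fin_cases k <;> rfl]
  simp only [det_succ_row_zero, Fin.sum_univ_succ, det_fin_one, det_fin_zero, Fin.zero_succAbove,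
    Fin.succ_succAbove_zero, Fin.succ_succAbove_succ, submatrix_apply, submatrix_submatrix,
    Function.comp_apply, of_apply, cons_val_zero, cons_val_succ, Finset.univ_unique,
    Finset.sum_singleton, Fin.default_eq_zero, Fin.val_zero, Fin.val_succ, pow_zero, pow_succ]
  norm_num [show ((3:Fin 6):ℕ)=3 from rfl, show ((4:Fin 6):ℕ)=4 from rfl]
  ring

set_option maxHeartbeats 2000000 in
private lemma L7_det3 (a : ℂ) (y : Fin 7 → ℂ) :
    ((L7mat a y).submatrix ![0,1,2,4,5,6] ![0,1,2,4,5,6]).det =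
      (y 4 * (y 2 ^ 2 - y 1 * y 3)) ^ 2 := by
  rw [show ((L7mat a y).submatrix ![0,1,2,4,5,6] ![0,1,2,4,5,6]) =
      !![0, y 2, y 3, 0, -y 0, -y 4;
       -(y 2), 0, 0, 0, -a * y 1, -(y 1);
       -(y 3), 0, 0, 0, -(1+a) * y 2, -(y 2);
       0, 0, 0, 0, -(y 4), 0;
       y 0, a * y 1, (1+a) * y 2, y 4, 0, 0;
       y 4, y 1, y 2, 0, 0, 0] from by ext i k; fin_cases i <;> fin_cases k <;> rfl]
  rw [det_succ_row _ 3, Fin.sum_univ_six]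
  simp only [v6, v6c, cons_val_zero, cons_val_one, cons_val_two, cons_val_three, cons_val_four,
    head_cons, tail_cons, head_fin_const, of_apply, cons_val', empty_val', cons_val_fin_one,
    mul_zero, zero_mul, mul_one, one_mul, neg_zero, add_zero, zero_add]
  rw [show ((!![0, y 2, y 3, 0, -y 0, -y 4;
       -(y 2), 0, 0, 0, -a * y 1, -(y 1);
       -(y 3), 0, 0, 0, -(1+a) * y 2, -(y 2);
       0, 0, 0, 0, -(y 4), 0;
       y 0, a * y 1, (1+a) * y 2, y 4, 0, 0;
       y 4, y 1, y 2, 0, 0, 0] : Matrix (Fin 6) (Fin 6) ℂ).submatrix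
        (Fin.succAbove 3) (Fin.succAbove 4)) =
      !![0, y 2, y 3, 0, -(y 4);
         -(y 2), 0, 0, 0, -(y 1);
         -(y 3), 0, 0, 0, -(y 2);
         y 0, a * y 1, (1+a) * y 2, y 4, 0;
         y 4, y 1, y 2, 0, 0] from by ext i k; fin_cases i <;> fin_cases k <;> rfl]
  simp only [det_succ_row_zero, Fin.sum_univ_succ, det_fin_one, det_fin_zero, Fin.zero_succAbove,
    Fin.succ_succAbove_zero, Fin.succ_succAbove_succ, submatrix_apply, submatrix_submatrix,
    Function.comp_apply, of_apply, cons_val_zero, cons_val_succ, Finset.univ_unique,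
    Finset.sum_singleton, Fin.default_eq_zero, Fin.val_zero, Fin.val_succ, pow_zero, pow_succ]
  norm_num [show ((3:Fin 6):ℕ)=3 from rfl, show ((4:Fin 6):ℕ)=4 from rfl]
  ring

set_option maxHeartbeats 2000000 in
private lemma L7_det4 (a : ℂ) (y : Fin 7 → ℂ) :
    ((L7mat a y).submatrix ![0,1,2,3,5,6] ![0,1,2,3,5,6]).det =
      (y 3 * (y 2 ^ 2 - 2 * (y 1 * y 3))) ^ 2 := by
  rw [show ((L7mat a y).submatrix ![0,1,2,3,5,6] ![0,1,2,3,5,6]) =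
      !![0, y 2, y 3, 0, -y 0, -y 4;
       -(y 2), 0, 0, 0, -a * y 1, -(y 1);
       -(y 3), 0, 0, 0, -(1+a) * y 2, -(y 2);
       0, 0, 0, 0, -(2+a) * y 3, -(y 3);
       y 0, a * y 1, (1+a) * y 2, (2+a) * y 3, 0, 0;
       y 4, y 1, y 2, y 3, 0, 0] from by ext i k; fin_cases i <;> fin_cases k <;> rfl]
  rw [det_succ_column _ 3, Fin.sum_univ_six]
  simp only [v6, v6c, cons_val_zero, cons_val_one, cons_val_two, cons_val_three, cons_val_four,
    head_cons, tail_cons, head_fin_const, of_apply, cons_val', empty_val', cons_val_fin_one,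
    mul_zero, zero_mul, mul_one, one_mul, neg_zero, add_zero, zero_add]
  rw [show ((!![0, y 2, y 3, 0, -y 0, -y 4;
       -(y 2), 0, 0, 0, -a * y 1, -(y 1);
       -(y 3), 0, 0, 0, -(1+a) * y 2, -(y 2);
       0, 0, 0, 0, -(2+a) * y 3, -(y 3);
       y 0, a * y 1, (1+a) * y 2, (2+a) * y 3, 0, 0;
       y 4, y 1, y 2, y 3, 0, 0] : Matrix (Fin 6) (Fin 6) ℂ).submatrix
        (Fin.succAbove 4) (Fin.succAbove 3)) =
      !![0, y 2, y 3, -y 0, -y 4;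
         -(y 2), 0, 0, -a * y 1, -(y 1);
         -(y 3), 0, 0, -(1+a) * y 2, -(y 2);
         0, 0, 0, -(2+a) * y 3, -(y 3);
         y 4, y 1, y 2, 0, 0] from by ext i k; fin_cases i <;> fin_cases k <;> rfl]
  rw [show ((!![0, y 2, y 3, 0, -y 0, -y 4;
       -(y 2), 0, 0, 0, -a * y 1, -(y 1);
       -(y 3), 0, 0, 0, -(1+a) * y 2, -(y 2);
       0, 0, 0, 0, -(2+a) * y 3, -(y 3);
       y 0, a * y 1, (1+a) * y 2, (2+a) * y 3, 0, 0;
       y 4, y 1, y 2, y 3, 0, 0] : Matrix (Fin 6) (Fin 6) ℂ).submatrix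
        (Fin.succAbove 5) (Fin.succAbove 3)) =
      !![0, y 2, y 3, -y 0, -y 4;
         -(y 2), 0, 0, -a * y 1, -(y 1);
         -(y 3), 0, 0, -(1+a) * y 2, -(y 2);
         0, 0, 0, -(2+a) * y 3, -(y 3);
         y 0, a * y 1, (1+a) * y 2, 0, 0] from by ext i k; fin_cases i <;> fin_cases k <;> rfl]
  simp only [det_succ_row_zero, Fin.sum_univ_succ, det_fin_one, det_fin_zero, Fin.zero_succAbove,
    Fin.succ_succAbove_zero, Fin.succ_succAbove_succ, submatrix_apply, submatrix_submatrix,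
    Function.comp_apply, of_apply, cons_val_zero, cons_val_succ, Finset.univ_unique,
    Finset.sum_singleton, Fin.default_eq_zero, Fin.val_zero, Fin.val_succ, pow_zero, pow_succ]
  norm_num [v6, show (5:Fin 6) = Fin.succ 4 from rfl, Matrix.cons_val_succ, show ((4:Fin 6):ℕ)=4 from rfl, show ((5:Fin 6):ℕ)=5 from rfl,
    show ((3:Fin 6):ℕ)=3 from rfl]
  ring

private lemma L7_rank_eq_six (a : ℂ) (y : Fin 7 → ℂ)
    (h : (y 3 ≠ 0 ∧ y 4 ≠ 0) ∨ (y 4 ≠ 0 ∧ y 2 ^ 2 - y 1 * y 3 ≠ 0) ∨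
      (y 3 ≠ 0 ∧ y 2 ^ 2 - 2 * (y 1 * y 3) ≠ 0)) :
    (L7mat a y).rank = 6 := by
  refine le_antisymm (L7_rank_le a y) ?_
  rcases h with ⟨h3, h4⟩ | ⟨h4, hq⟩ | ⟨h3, hq⟩
  · exact rank_ge_of_submatrix _ ![0,2,3,4,5,6] ![0,2,3,4,5,6]
      (by rw [L7_det1]; exact pow_ne_zero _ (mul_ne_zero (pow_ne_zero _ h3) h4))
  · exact rank_ge_of_submatrix _ ![0,1,2,4,5,6] ![0,1,2,4,5,6]
      (by rw [L7_det3]; exact pow_ne_zero _ (mul_ne_zero h4 hq))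
  · exact rank_ge_of_submatrix _ ![0,1,2,3,5,6] ![0,1,2,3,5,6]
      (by rw [L7_det4]; exact pow_ne_zero _ (mul_ne_zero h3 hq))

private lemma L7_comb (a α β : ℂ) (x a' : Fin 7 → ℂ) :
    α • L7mat a x + β • L7mat a a' = L7mat a (fun i => α * x i + β * a' i) := by
  rw [← Matrix.ext_iff]
  simp only [L7mat, Fin.forall_fin_succ, Matrix.add_apply, Matrix.smul_apply, smul_eq_mul,
    Matrix.cons_val_zero, Matrix.cons_val_succ, Matrix.of_apply, IsEmpty.forall_iff, and_true]
  norm_num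
  and_intros <;> first | trivial | ring

open MvPolynomial in
/-- With `R = max_y rank A_y`, there is a nonzero polynomial `F` in 14 variables such
that whenever `F(x, a') ≠ 0` and `(α, β) ≠ (0, 0)`, one has
`rank (α A_x + β A_a') = R`: the generic pencil has no Jordan blocks, i.e.
`L7` is of Kronecker type. -/
theorem L7_kronecker_type (a : ℂ) (R : ℕ)
    (hR : IsGreatest {r : ℕ | ∃ y : Fin 7 → ℂ, (L7mat a y).rank = r} R) :
    ∃ F : MvPolynomial (Fin 7 ⊕ Fin 7) ℂ, F ≠ 0 ∧
      ∀ x a' : Fin 7 → ℂ, MvPolynomial.eval (Sum.elim x a') F ≠ 0 →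
        ∀ α β : ℂ, (α, β) ≠ (0, 0) →
          (α • L7mat a x + β • L7mat a a').rank = R := by
  classical
  -- R = 6
  have hR6 : R = 6 := by
    have h1 : 6 ≤ R := hR.2 ⟨![0,0,0,1,1,0,0], L7_rank_eq_six a _ (Or.inl ⟨one_ne_zero, one_ne_zero⟩)⟩
    obtain ⟨y₀, hy₀⟩ := hR.1
    have h2 : R ≤ 6 := hy₀ ▸ L7_rank_le a y₀
    omega
  refine ⟨(X (Sum.inl 2) * X (Sum.inr 3) - X (Sum.inl 3) * X (Sum.inr 2)) *
      ((X (Sum.inl 3) * X (Sum.inr 4) - X (Sum.inl 4) * X (Sum.inr 3)) *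
      ((X (Sum.inr 4) * X (Sum.inl 2) - X (Sum.inl 4) * X (Sum.inr 2)) ^ 2 -
        2 * (X (Sum.inr 4) * X (Sum.inl 1) - X (Sum.inl 4) * X (Sum.inr 1)) *
          (X (Sum.inr 4) * X (Sum.inl 3) - X (Sum.inl 4) * X (Sum.inr 3)))), ?_, ?_⟩
  · -- F ≠ 0 : evaluate at a point
    intro h0
    have := congrArg (MvPolynomial.eval
      (Sum.elim (![0,0,1,0,1,0,0] : Fin 7 → ℂ) (![0,0,0,1,1,0,0] : Fin 7 → ℂ))) h0
    simp only [_root_.map_mul, map_sub, map_pow, map_ofNat, eval_X, Sum.elim_inl, Sum.elim_inr,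
      map_zero] at this
    norm_num at this
    change (1:ℂ) * 1 - 0 * 0 = 0 ∨ (0:ℂ) * 1 - 1 * 1 = 0 ∨ (1:ℂ) * 1 - 1 * 0 = 0 at this
    norm_num at this
  · intro x a' hF α β hαβ
    have hne : ¬(α = 0 ∧ β = 0) := by
      rintro ⟨rfl, rfl⟩; exact hαβ rfl
    simp only [_root_.map_mul, map_sub, map_pow, map_ofNat, eval_X, Sum.elim_inl, Sum.elim_inr] at hF
    have hd23 : x 2 * a' 3 - x 3 * a' 2 ≠ 0 := fun h => hF (by rw [h]; ring)
    have hd34 : x 3 * a' 4 - x 4 * a' 3 ≠ 0 := fun h => hF (by rw [h]; ring)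
    have hG : (a' 4 * x 2 - x 4 * a' 2) ^ 2 -
        2 * (a' 4 * x 1 - x 4 * a' 1) * (a' 4 * x 3 - x 4 * a' 3) ≠ 0 :=
      fun h => hF (by rw [h]; ring)
    rw [L7_comb, hR6]
    apply L7_rank_eq_six
    show (α * x 3 + β * a' 3 ≠ 0 ∧ α * x 4 + β * a' 4 ≠ 0) ∨
      (α * x 4 + β * a' 4 ≠ 0 ∧
        (α * x 2 + β * a' 2) ^ 2 - (α * x 1 + β * a' 1) * (α * x 3 + β * a' 3) ≠ 0) ∨
      (α * x 3 + β * a' 3 ≠ 0 ∧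
        (α * x 2 + β * a' 2) ^ 2 - 2 * ((α * x 1 + β * a' 1) * (α * x 3 + β * a' 3)) ≠ 0)
    by_cases h3 : α * x 3 + β * a' 3 = 0
    · -- z3 = 0 : then z2 ≠ 0 and z4 ≠ 0
      have h2 : α * x 2 + β * a' 2 ≠ 0 := by
        intro h2
        refine hne ⟨?_, ?_⟩
        · have hA : α * (x 2 * a' 3 - x 3 * a' 2) = 0 := by
            linear_combination a' 3 * h2 - a' 2 * h3
          exact (mul_eq_zero.mp hA).resolve_right hd23
        · have hB : β * (x 2 * a' 3 - x 3 * a' 2) = 0 := by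
            linear_combination x 2 * h3 - x 3 * h2
          exact (mul_eq_zero.mp hB).resolve_right hd23
      have h4 : α * x 4 + β * a' 4 ≠ 0 := by
        intro h4
        refine hne ⟨?_, ?_⟩
        · have hA : α * (x 3 * a' 4 - x 4 * a' 3) = 0 := by
            linear_combination a' 4 * h3 - a' 3 * h4
          exact (mul_eq_zero.mp hA).resolve_right hd34
        · have hB : β * (x 3 * a' 4 - x 4 * a' 3) = 0 := by
            linear_combination x 3 * h4 - x 4 * h3
          exact (mul_eq_zero.mp hB).resolve_right hd34
      refine Or.inr (Or.inl ⟨h4, ?_⟩)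
      rw [h3, mul_zero, sub_zero]
      exact pow_ne_zero 2 h2
    · by_cases h4 : α * x 4 + β * a' 4 = 0
      · refine Or.inr (Or.inr ⟨h3, ?_⟩)
        intro hQ
        refine hne ⟨?_, ?_⟩
        · have hα : α ^ 2 * ((a' 4 * x 2 - x 4 * a' 2) ^ 2 -
              2 * (a' 4 * x 1 - x 4 * a' 1) * (a' 4 * x 3 - x 4 * a' 3)) = 0 := by
            linear_combination (a' 4 ^ 2) * hQ +
              (-β * a' 2 ^ 2 * a' 4 + 2 * β * a' 1 * a' 3 * a' 4 + α * x 4 * a' 2 ^ 2 -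
                2 * α * x 4 * a' 1 * a' 3 + 2 * α * x 3 * a' 1 * a' 4 -
                2 * α * x 2 * a' 2 * a' 4 + 2 * α * x 1 * a' 3 * a' 4) * h4
          have := (mul_eq_zero.mp hα).resolve_right hG
          exact pow_eq_zero_iff (n := 2) (by norm_num) |>.mp this
        · have hβ : β ^ 2 * ((a' 4 * x 2 - x 4 * a' 2) ^ 2 -
              2 * (a' 4 * x 1 - x 4 * a' 1) * (a' 4 * x 3 - x 4 * a' 3)) = 0 := by
            linear_combination (x 4 ^ 2) * hQ +
              (2 * β * x 3 * x 4 * a' 1 - 2 * β * x 2 * x 4 * a' 2 + β * x 2 ^ 2 * a' 4 +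
                2 * β * x 1 * x 4 * a' 3 - 2 * β * x 1 * x 3 * a' 4 - α * x 2 ^ 2 * x 4 +
                2 * α * x 1 * x 3 * x 4) * h4
          have := (mul_eq_zero.mp hβ).resolve_right hG
          exact pow_eq_zero_iff (n := 2) (by norm_num) |>.mp this
      · exact Or.inl ⟨h3, h4⟩
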